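/- The topological entropy of the compactified slow Gauss map g̃ : [0,1] → [0,1] equals log((1+√5)/2). -/

import Mathlib

/-- The compactified slow Gauss map `g̃ = k ∘ g ∘ k⁻¹ : [0,1] → [0,1]`, `k(x) = x/(1+x)`:
`g̃(0) = 1`, `g̃(x) = 1 - x` on `(0,1/2)`, `g̃(x) = 2 - 1/x` on `[1/2,1]`. -/
noncomputable def gtilde (x : ℝ) : ℝ :=
  if x = 0 then 1
  else if x < 1/2 then 1 - x
  else 2 - 1/x

open Set

lemma gtilde_left {x : ℝ} (h : x < 1/2) : gtilde x = 1 - x := by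
  rcases eq_or_ne x 0 with rfl | hx
  · simp [gtilde]
  · rw [gtilde, if_neg hx, if_pos h]

lemma gtilde_right {x : ℝ} (h : 1/2 ≤ x) : gtilde x = 2 - 1/x := by
  have hx : x ≠ 0 := by intro h0; rw [h0] at h; norm_num at h
  rw [gtilde, if_neg hx, if_neg (not_lt.2 h)]

/-- image of left branch -/
lemma gtilde_mem_left {x : ℝ} (h0 : 0 ≤ x) (h : x < 1/2) : gtilde x ∈ Ioc (1/2 : ℝ) 1 := by
  rw [gtilde_left h]; constructor <;> [linarith; linarith]

/-- image of right branch -/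
lemma gtilde_mem_right {x : ℝ} (h : 1/2 ≤ x) (h1 : x ≤ 1) : gtilde x ∈ Icc (0:ℝ) 1 := by
  rw [gtilde_right h]
  have hx : (0:ℝ) < x := by linarith
  constructor
  · have : 1/x ≤ 2 := by rw [div_le_iff₀ hx]; linarith
    linarith
  · have : 1 ≤ 1/x := by rw [le_div_iff₀ hx]; linarith
    linarith

lemma gtilde_maps : MapsTo gtilde (Icc (0:ℝ) 1) (Icc (0:ℝ) 1) := by
  intro x hx
  rcases lt_or_ge x (1/2) with h | h
  · exact Ioc_subset_Icc_self.trans (Icc_subset_Icc (by norm_num) le_rfl)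
      (gtilde_mem_left hx.1 h)
  · exact gtilde_mem_right h hx.2

lemma gtilde_iter_mem {x : ℝ} (hx : x ∈ Icc (0:ℝ) 1) (k : ℕ) :
    gtilde^[k] x ∈ Icc (0:ℝ) 1 := by
  induction k with
  | zero => exact hx
  | succ k ih => rw [Function.iterate_succ_apply']; exact gtilde_maps ih

lemma gtilde_mono_right {x y : ℝ} (hx : 1/2 ≤ x) (hxy : x ≤ y) :
    gtilde x ≤ gtilde y := by
  rw [gtilde_right hx, gtilde_right (hx.trans hxy)]
  have h0 : (0:ℝ) < x := by linarith
  have := one_div_le_one_div_of_le h0 hxy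
  linarith

lemma gtilde_anti_left {x y : ℝ} (hy : y < 1/2) (hxy : x ≤ y) :
    gtilde y ≤ gtilde x := by
  rw [gtilde_left hy, gtilde_left (lt_of_le_of_lt hxy hy)]; linarith

/-- admissible: no two consecutive `false`s -/
def adm (l : List Bool) : Prop := List.Chain' (fun a b => a = true ∨ b = true) l

lemma adm_cons {b : Bool} {t : List Bool} :
    adm (b :: t) ↔ (∀ y ∈ t.head?, b = true ∨ y = true) ∧ adm t := List.isChain_cons

lemma adm_nil : adm [] := List.isChain_nil

instance adm_dec : DecidablePred adm := fun l => by unfold adm List.Chain'; infer_instance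

/-- admissible words of length n -/
def W : ℕ → Finset (List Bool)
  | 0 => {[]}
  | (n+1) => ((W n).image (List.cons true)) ∪
      (((W n).filter (fun l => l.head? ≠ some false)).image (List.cons false))

lemma mem_W {n : ℕ} {l : List Bool} : l ∈ W n ↔ l.length = n ∧ adm l := by
  induction n generalizing l with
  | zero =>
    simp only [W, Finset.mem_singleton]
    constructor
    · rintro rfl; exact ⟨rfl, adm_nil⟩
    · rintro ⟨h, -⟩; exact List.length_eq_zero_iff.1 h
  | succ n ih =>
    simp only [W, Finset.mem_union, Finset.mem_image, Finset.mem_filter]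
    constructor
    · rintro (⟨t, ht, rfl⟩ | ⟨t, ⟨ht, hh⟩, rfl⟩)
      · obtain ⟨hl, ha⟩ := ih.1 ht
        exact ⟨by simp [hl], adm_cons.2 ⟨fun y _ => Or.inl rfl, ha⟩⟩
      · obtain ⟨hl, ha⟩ := ih.1 ht
        refine ⟨by simp [hl], adm_cons.2 ⟨fun y hy => ?_, ha⟩⟩
        right
        cases y with
        | true => rfl
        | false => exact absurd hy (by simpa using hh)
    · rintro ⟨hl, ha⟩
      cases l with
      | nil => simp at hl
      | cons b t =>
        obtain ⟨hh, ht⟩ := adm_cons.1 ha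
        have htW : t ∈ W n := ih.2 ⟨by simpa using hl, ht⟩
        cases b with
        | true => exact Or.inl ⟨t, htW, rfl⟩
        | false =>
          refine Or.inr ⟨t, ⟨htW, ?_⟩, rfl⟩
          cases t with
          | nil => simp
          | cons c t' =>
            have := hh c rfl
            simp only [Bool.false_eq_true, false_or] at this
            simp [this]

lemma W_card : ∀ n, (W n).card = Nat.fib (n+2) ∧
    ((W n).filter (fun l => l.head? ≠ some false)).card = Nat.fib (n+1) := by
  intro n
  induction n with
  | zero => decide
  | succ n ih =>
    have hinj1 : Set.InjOn (List.cons true) (W n) := fun a _ b _ h => by simpa using h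
    have hinj2 : Set.InjOn (List.cons false)
        ((W n).filter (fun l => l.head? ≠ some false)) := fun a _ b _ h => by simpa using h
    have hdisj : Disjoint ((W n).image (List.cons true))
        (((W n).filter (fun l => l.head? ≠ some false)).image (List.cons false)) := by
      rw [Finset.disjoint_left]
      rintro a ha hb
      simp only [Finset.mem_image] at ha hb
      obtain ⟨t, -, rfl⟩ := ha
      obtain ⟨t', -, h⟩ := hb
      simp at h
    constructor
    · rw [W, Finset.card_union_of_disjoint hdisj, Finset.card_image_of_injOn hinj1,
        Finset.card_image_of_injOn hinj2, ih.1, ih.2]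
      rw [Nat.fib_add_two (n := n+1), Nat.fib_add_two (n := n)]
      ring
    · have : (W (n+1)).filter (fun l => l.head? ≠ some false)
          = (W n).image (List.cons true) := by
        ext l
        simp only [Finset.mem_filter, W, Finset.mem_union, Finset.mem_image]
        constructor
        · rintro ⟨⟨t, ht, rfl⟩ | ⟨t, ht, rfl⟩, hh⟩
          · exact ⟨t, ht, rfl⟩
          · simp at hh
        · rintro ⟨t, ht, rfl⟩
          exact ⟨Or.inl ⟨t, ht, rfl⟩, by simp⟩
      rw [this, Finset.card_image_of_injOn hinj1, ih.1]

open Set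

/-- the marked point of a cylinder -/
noncomputable def pw : List Bool → ℝ
  | [] => 3/5
  | (true :: t) => 1 / (2 - pw t)
  | (false :: t) => 1 - pw t

lemma pw_mem : ∀ {l : List Bool}, adm l → pw l ∈ Ioo (0:ℝ) 1 ∧
    (l.head? = some true → pw l ∈ Ioo (1/2 : ℝ) 1) ∧
    (l.head? = some false → pw l ∈ Ioo (0:ℝ) (1/2)) := by
  intro l
  induction l with
  | nil => intro _; refine ⟨by norm_num [pw], by simp, by simp⟩
  | cons b t ih =>
    intro ha
    obtain ⟨hh, ht⟩ := adm_cons.1 ha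
    obtain ⟨ht01, htT, htF⟩ := ih ht
    cases b with
    | true =>
      have h2 : (1:ℝ) < 2 - pw t := by linarith [ht01.2]
      have h2' : 2 - pw t < 2 := by linarith [ht01.1]
      have h0 : (0:ℝ) < 2 - pw t := by linarith
      have hgt : (1/2 : ℝ) < 1 / (2 - pw t) := by
        rw [div_lt_div_iff₀ (by norm_num) h0]; linarith
      have hlt : 1 / (2 - pw t) < 1 := by
        rw [div_lt_one h0]; linarith
      show pw (true :: t) ∈ _ ∧ _
      rw [pw]
      exact ⟨⟨by linarith, hlt⟩, fun _ => ⟨hgt, hlt⟩, by simp⟩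
    | false =>
      have hT : pw t ∈ Ioo (1/2 : ℝ) 1 := by
        cases t with
        | nil => norm_num [pw]
        | cons c t' =>
          have hc := hh c rfl
          simp only [Bool.false_eq_true, false_or] at hc
          subst hc; exact htT rfl
      show pw (false :: t) ∈ _ ∧ _
      rw [pw]
      exact ⟨⟨by linarith [hT.2], by linarith [hT.1]⟩, by simp,
        fun _ => ⟨by linarith [hT.2], by linarith [hT.1]⟩⟩

lemma adm_tail {b : Bool} {t : List Bool} (h : adm (b :: t)) : adm t := (adm_cons.1 h).2

lemma gtilde_pw {b : Bool} {t : List Bool} (h : adm (b :: t)) :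
    gtilde (pw (b :: t)) = pw t := by
  obtain ⟨h01, hT, hF⟩ := pw_mem h
  cases b with
  | true =>
    have := hT rfl
    rw [gtilde_right (le_of_lt this.1)]
    rw [pw] at this ⊢
    have h0 : (0:ℝ) < 2 - pw t := by
      rcases (pw_mem (adm_tail h)).1 with ⟨-, h2⟩; linarith
    field_simp
    ring
  | false =>
    have := hF rfl
    rw [gtilde_left this.2, pw]
    ring

lemma gtilde_iterate_pw : ∀ (l : List Bool), adm l → ∀ k ≤ l.length,
    gtilde^[k] (pw l) = pw (l.drop k) := by
  intro l
  induction l with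
  | nil => intro _ k hk; simp only [List.length_nil, Nat.le_zero] at hk; subst hk; simp
  | cons b t ih =>
    intro ha k hk
    cases k with
    | zero => simp
    | succ k =>
      rw [Function.iterate_succ_apply, gtilde_pw ha, List.drop_succ_cons]
      exact ih (adm_tail ha) k (by simpa using hk)

/-- separation at the branch point -/
lemma sep_step {x y : ℝ} (hx : x ∈ Ioo (0:ℝ) (1/2)) (hy : y ∈ Ioo (1/2 : ℝ) 1) :
    (1/10 : ℝ) ≤ |x - y| ∨ (1/10 : ℝ) ≤ |gtilde x - gtilde y| := by
  rcases le_or_gt (1/10 : ℝ) |x - y| with h | h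
  · exact Or.inl h
  · right
    have hy35 : y < 3/5 := by
      rw [abs_sub_lt_iff] at h
      linarith [h.2, hx.2]
    rw [gtilde_left hx.2, gtilde_right (le_of_lt hy.1)]
    have hy0 : (0:ℝ) < y := by linarith [hy.1]
    have h1y : 5/3 < 1/y := by rw [lt_div_iff₀ hy0]; linarith
    have hgx : (1/2 : ℝ) < 1 - x := by linarith [hx.2]
    have hgy : 2 - 1/y < 1/3 := by linarith
    rw [abs_sub_comm, abs_of_nonpos (by linarith)]
    linarith

/-- main separation lemma -/
lemma pw_sep : ∀ (l l' : List Bool), adm l → adm l' → l.length = l'.length → l ≠ l' →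
    ∃ k ≤ l.length, (1/10 : ℝ) ≤ |gtilde^[k] (pw l) - gtilde^[k] (pw l')| := by
  intro l
  induction l with
  | nil =>
    intro l' _ _ hlen hne
    exact absurd (List.length_eq_zero_iff.1 hlen.symm).symm hne
  | cons b t ih =>
    intro l' ha ha' hlen hne
    cases l' with
    | nil => simp at hlen
    | cons b' t' =>
      rcases eq_or_ne b b' with rfl | hbb
      · have htt : t ≠ t' := fun h => hne (by rw [h])
        obtain ⟨k, hk, hsep⟩ := ih t' (adm_tail ha) (adm_tail ha') (by simpa using hlen) htt
        refine ⟨k+1, by simpa using hk, ?_⟩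
        rw [Function.iterate_succ_apply, Function.iterate_succ_apply,
          gtilde_pw ha, gtilde_pw ha']
        exact hsep
      · -- differing heads
        have hs : (1/10 : ℝ) ≤ |pw (b :: t) - pw (b' :: t')| ∨
            (1/10 : ℝ) ≤ |gtilde (pw (b :: t)) - gtilde (pw (b' :: t'))| := by
          cases b with
          | false =>
            have hb' : b' = true := by cases b' <;> simp_all
            subst hb'
            exact sep_step ((pw_mem ha).2.2 rfl) ((pw_mem ha').2.1 rfl)
          | true =>
            have hb' : b' = false := by cases b' <;> simp_all
            subst hb'
            rcases sep_step ((pw_mem ha').2.2 rfl) ((pw_mem ha).2.1 rfl) with h | h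
            · exact Or.inl (by rwa [abs_sub_comm])
            · exact Or.inr (by rwa [abs_sub_comm])
        rcases hs with h | h
        · exact ⟨0, Nat.zero_le _, by simpa using h⟩
        · exact ⟨1, by simp, by simpa using h⟩

open Dynamics Filter Topology Uniformity goldenRatio Real
open scoped SetRel

lemma pw_F {l : List Bool} (h : adm l) : pw l ∈ Icc (0:ℝ) 1 :=
  Ioo_subset_Icc_self (pw_mem h).1

/-- the fixed entourage for the lower bound -/
def U0 : Set (ℝ × ℝ) := {p | dist p.1 p.2 < 1/20}

lemma U0_uni : U0 ∈ uniformity ℝ := Metric.dist_mem_uniformity (by norm_num)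

lemma isDynNetIn_W (n : ℕ) :
    IsDynNetIn gtilde (Icc (0:ℝ) 1) U0 (n+1) (((W n).image pw : Finset ℝ) : Set ℝ) := by
  constructor
  · intro x hx
    simp only [Finset.coe_image, Set.mem_image, Finset.mem_coe] at hx
    obtain ⟨l, hl, rfl⟩ := hx
    exact pw_F (mem_W.1 hl).2
  · intro x hx y hy hxy
    simp only [Finset.coe_image, Set.mem_image, Finset.mem_coe] at hx hy
    obtain ⟨l, hl, rfl⟩ := hx
    obtain ⟨l', hl', rfl⟩ := hy
    obtain ⟨hllen, hladm⟩ := mem_W.1 hl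
    obtain ⟨hl'len, hl'adm⟩ := mem_W.1 hl'
    have hne : l ≠ l' := fun h => hxy (by rw [h])
    obtain ⟨k, hk, hsep⟩ := pw_sep l l' hladm hl'adm (by rw [hllen, hl'len]) hne
    rw [Function.onFun]
    rw [Set.disjoint_left]
    intro z hz hz'
    rw [UniformSpace.ball, Set.mem_preimage, mem_dynEntourage] at hz hz'
    have h1 := hz k (by omega)
    have h2 := hz' k (by omega)
    simp only [U0, Set.mem_setOf_eq] at h1 h2
    have : dist (gtilde^[k] (pw l)) (gtilde^[k] (pw l')) < 1/10 := by
      calc dist (gtilde^[k] (pw l)) (gtilde^[k] (pw l'))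
          ≤ dist (gtilde^[k] (pw l)) (gtilde^[k] z)
            + dist (gtilde^[k] z) (gtilde^[k] (pw l')) := dist_triangle _ _ _
        _ < 1/20 + 1/20 := add_lt_add h1 (by rw [dist_comm]; exact h2)
        _ = 1/10 := by norm_num
    rw [Real.dist_eq] at this
    linarith

lemma pw_injOn (n : ℕ) : Set.InjOn pw (W n) := by
  intro l hl l' hl' h
  by_contra hne
  obtain ⟨hllen, hladm⟩ := mem_W.1 hl
  obtain ⟨hl'len, hl'adm⟩ := mem_W.1 hl'
  obtain ⟨k, -, hsep⟩ := pw_sep l l' hladm hl'adm (by rw [hllen, hl'len]) hne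
  rw [h, sub_self, abs_zero] at hsep
  linarith

lemma fib_le_netMaxcard (n : ℕ) :
    (Nat.fib (n+2) : ℕ∞) ≤ netMaxcard gtilde (Icc (0:ℝ) 1) U0 (n+1) := by
  have := (isDynNetIn_W n).card_le_netMaxcard
  rwa [Finset.card_image_of_injOn (pw_injOn n), (W_card n).1] at this

/-- golden ratio powers below Fibonacci -/
lemma gold_pow_le_fib : ∀ n : ℕ, goldenRatio ^ n ≤ (Nat.fib (n+2) : ℝ)
  | 0 => by norm_num
  | 1 => by
      rw [pow_one]
      have h2 := goldenRatio_lt_two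
      have hf : Nat.fib 3 = 2 := by decide
      rw [hf]
      norm_num
      linarith
  | (n+2) => by
      have h1 := gold_pow_le_fib n
      have h2 := gold_pow_le_fib (n+1)
      have : goldenRatio ^ (n+2) = goldenRatio ^ (n+1) + goldenRatio ^ n := by
        have := goldenRatio_sq
        calc goldenRatio ^ (n+2) = goldenRatio ^ n * goldenRatio ^ 2 := by ring
          _ = goldenRatio ^ n * (goldenRatio + 1) := by rw [goldenRatio_sq]
          _ = goldenRatio ^ (n+1) + goldenRatio ^ n := by ring
      rw [this, Nat.fib_add_two]
      push_cast
      linarith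

lemma gold_le_fib' (n : ℕ) : goldenRatio ^ (n-1) ≤ (Nat.fib (n+1) : ℝ) := by
  cases n with
  | zero =>
      have hf : Nat.fib 1 = 1 := by decide
      simp [hf]
  | succ n => simpa using gold_pow_le_fib n

lemma lower_bound :
    (Real.log goldenRatio : EReal) ≤ netEntropyEntourage gtilde (Icc (0:ℝ) 1) U0 := by
  have key : ∀ n : ℕ, 1 ≤ n →
      ((Real.log (goldenRatio ^ (n-1)) / n : ℝ) : EReal) ≤
        ENNReal.log (netMaxcard gtilde (Icc (0:ℝ) 1) U0 n) / (n : EReal) := by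
    intro n hn
    have hb : (Nat.fib (n+1) : ℕ∞) ≤ netMaxcard gtilde (Icc (0:ℝ) 1) U0 n := by
      have h := fib_le_netMaxcard (n-1)
      have e1 : n-1+2 = n+1 := by omega
      have e2 : n-1+1 = n := by omega
      rwa [e1, e2] at h
    have hlog : ((Real.log (goldenRatio ^ (n-1)) : ℝ) : EReal) ≤
        ENNReal.log (netMaxcard gtilde (Icc (0:ℝ) 1) U0 n) := by
      have h1 : ENNReal.ofReal (goldenRatio ^ (n-1)) ≤
          (netMaxcard gtilde (Icc (0:ℝ) 1) U0 n).toENNReal := by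
        calc ENNReal.ofReal (goldenRatio ^ (n-1))
            ≤ ENNReal.ofReal (Nat.fib (n+1) : ℝ) := ENNReal.ofReal_le_ofReal (gold_le_fib' n)
          _ = ((Nat.fib (n+1) : ℕ∞) : ENNReal) := by
              rw [ENNReal.ofReal_natCast]; simp
          _ ≤ _ := ENat.toENNReal_mono hb
      have h2 := ENNReal.log_monotone h1
      rwa [ENNReal.log_ofReal_of_pos (pow_pos goldenRatio_pos _)] at h2
    calc ((Real.log (goldenRatio ^ (n-1)) / n : ℝ) : EReal)
        = ((Real.log (goldenRatio ^ (n-1)) : ℝ) : EReal) / (n : EReal) := by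
          rw [EReal.coe_div]; norm_cast
      _ ≤ _ := EReal.div_le_div_right_of_nonneg (Nat.cast_nonneg' n) hlog
  have hlim : Tendsto (fun n : ℕ => ((Real.log (goldenRatio ^ (n-1)) / n : ℝ) : EReal))
      atTop (𝓝 ((Real.log goldenRatio : ℝ) : EReal)) := by
    rw [EReal.tendsto_coe]
    have heq : ∀ᶠ n : ℕ in atTop, (1 - 1/(n:ℝ)) * Real.log goldenRatio
        = Real.log (goldenRatio ^ (n-1)) / n := by
      filter_upwards [eventually_ge_atTop 1] with n hn
      rw [Real.log_pow]
      have hn0 : (n:ℝ) ≠ 0 := by positivity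
      have : ((n - 1 : ℕ) : ℝ) = (n : ℝ) - 1 := by
        have : (1:ℕ) ≤ n := hn
        push_cast [this]; ring
      rw [this]
      field_simp
    refine Tendsto.congr' heq ?_
    have h1 : Tendsto (fun n : ℕ => 1 - 1/(n:ℝ)) atTop (𝓝 (1 - 0 : ℝ)) :=
      Tendsto.sub tendsto_const_nhds tendsto_one_div_atTop_nhds_zero_nat
    rw [sub_zero] at h1
    have := h1.mul_const (Real.log goldenRatio)
    simpa using this
  calc (Real.log goldenRatio : EReal)
      = atTop.limsup (fun n : ℕ => ((Real.log (goldenRatio ^ (n-1)) / n : ℝ) : EReal)) :=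
        (hlim.limsup_eq).symm
    _ ≤ atTop.limsup (fun n : ℕ =>
          ENNReal.log (netMaxcard gtilde (Icc (0:ℝ) 1) U0 n) / (n : EReal)) := by
        exact limsup_le_limsup (by
          filter_upwards [eventually_ge_atTop 1] with n hn
          exact key n hn)
    _ = netEntropyEntourage gtilde (Icc (0:ℝ) 1) U0 := rfl

/-! ### Upper bound -/

/-- itinerary word -/
noncomputable def wrd : ℕ → ℝ → List Bool
  | 0, _ => []
  | (n+1), x => (if (1:ℝ)/2 ≤ x then true else false) :: wrd n (gtilde x)

lemma wrd_length : ∀ (n : ℕ) (x : ℝ), (wrd n x).length = n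
  | 0, _ => rfl
  | (n+1), x => by rw [wrd]; simp [wrd_length n]

lemma wrd_head_true {x : ℝ} (h : 1/2 ≤ x) (n : ℕ) :
    wrd (n+1) x = true :: wrd n (gtilde x) := by rw [wrd, if_pos h]

lemma wrd_head_false {x : ℝ} (h : ¬ (1/2 ≤ x)) (n : ℕ) :
    wrd (n+1) x = false :: wrd n (gtilde x) := by rw [wrd, if_neg h]

lemma wrd_adm : ∀ (n : ℕ) {x : ℝ}, x ∈ Icc (0:ℝ) 1 → adm (wrd n x)
  | 0, x, _ => adm_nil
  | (n+1), x, hx => by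
    rw [wrd]
    refine adm_cons.2 ⟨?_, wrd_adm n (gtilde_maps hx)⟩
    intro y hy
    by_cases h : (1:ℝ)/2 ≤ x
    · rw [if_pos h]; exact Or.inl rfl
    · right
      have hTx : gtilde x ∈ Set.Ioc (1/2 : ℝ) 1 := gtilde_mem_left hx.1 (not_le.1 h)
      cases n with
      | zero => simp [wrd] at hy
      | succ n =>
        rw [wrd_head_true (le_of_lt hTx.1) n] at hy
        simp only [List.head?_cons, Option.mem_def, Option.some.injEq] at hy
        exact hy.symm

lemma wrd_take : ∀ (n k : ℕ) (x : ℝ), k ≤ n → (wrd n x).take k = wrd k x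
  | n, 0, x, _ => by simp [wrd]
  | 0, (k+1), x, h => by omega
  | (n+1), (k+1), x, h => by
    rw [wrd, wrd]
    simp only [List.take_succ_cons]
    rw [wrd_take n k (gtilde x) (by omega)]

/-- sign of a word -/
noncomputable def sgn (l : List Bool) : ℝ := (-1)^(l.count false)

lemma sgn_true (l : List Bool) : sgn (true :: l) = sgn l := by
  simp [sgn, List.count_cons]

lemma sgn_false (l : List Bool) : sgn (false :: l) = -sgn l := by
  rw [sgn, sgn, List.count_cons]
  simp [pow_succ]

lemma sgn_sq (l : List Bool) : sgn l * sgn l = 1 := by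
  rw [sgn, ← pow_add, ← two_mul, pow_mul]
  norm_num

/-- monotonicity of iterates on cylinders -/
lemma wrd_mono : ∀ (n : ℕ) {x y : ℝ}, x ∈ Icc (0:ℝ) 1 → y ∈ Icc (0:ℝ) 1 → x ≤ y →
    wrd n x = wrd n y → 0 ≤ sgn (wrd n x) * (gtilde^[n] y - gtilde^[n] x)
  | 0, x, y, hx, hy, hxy, _ => by simp [wrd, sgn, hxy]
  | (n+1), x, y, hx, hy, hxy, hw => by
    by_cases h : (1:ℝ)/2 ≤ x
    · have hy2 : (1:ℝ)/2 ≤ y := le_trans h hxy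
      rw [wrd_head_true h, wrd_head_true hy2] at hw
      have htl : wrd n (gtilde x) = wrd n (gtilde y) := by
        injection hw
      have hT : gtilde x ≤ gtilde y := gtilde_mono_right h hxy
      have := wrd_mono n (gtilde_maps hx) (gtilde_maps hy) hT htl
      rw [wrd_head_true h, sgn_true, Function.iterate_succ_apply,
        Function.iterate_succ_apply]
      exact this
    · have hy2 : ¬ ((1:ℝ)/2 ≤ y) := by
        intro hc
        rw [wrd_head_true hc, wrd_head_false h] at hw
        injection hw with h1 _
        exact Bool.noConfusion h1
      rw [wrd_head_false h, wrd_head_false hy2] at hw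
      have htl : wrd n (gtilde x) = wrd n (gtilde y) := by injection hw
      have hT : gtilde y ≤ gtilde x := gtilde_anti_left (not_le.1 hy2) hxy
      have key := wrd_mono n (gtilde_maps hy) (gtilde_maps hx) hT htl.symm
      rw [wrd_head_false h, sgn_false, Function.iterate_succ_apply,
        Function.iterate_succ_apply]
      rw [← htl] at key
      have hrw : -sgn (wrd n (gtilde x)) * (gtilde^[n] (gtilde y) - gtilde^[n] (gtilde x))
          = sgn (wrd n (gtilde x)) * (gtilde^[n] (gtilde x) - gtilde^[n] (gtilde y)) := by ring
      rw [hrw]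
      exact key

/-- grid position of the k-th iterate -/
noncomputable def grd (m k : ℕ) (x : ℝ) : ℤ := ⌊(m:ℝ) * gtilde^[k] x⌋

lemma grd_mem {m k : ℕ} {x : ℝ} (hx : x ∈ Icc (0:ℝ) 1) : grd m k x ∈ Finset.Icc (0:ℤ) m := by
  have h := gtilde_iter_mem hx k
  rw [Finset.mem_Icc, grd]
  constructor
  · exact Int.floor_nonneg.2 (by nlinarith [h.1, h.2])
  · calc ⌊(m:ℝ) * gtilde^[k] x⌋ ≤ ⌊(m:ℝ)⌋ := by
          apply Int.floor_le_floor
          nlinarith [h.1, h.2]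
      _ = (m:ℤ) := Int.floor_natCast m

/-- signed sum code -/
noncomputable def scode (m n : ℕ) (x : ℝ) : ℤ :=
  ∑ k ∈ Finset.range n, (-1)^((wrd k x).count false) * grd m k x

lemma sgn_eq_cast (l : List Bool) : sgn l = (((-1:ℤ)^(l.count false) : ℤ) : ℝ) := by
  rw [sgn]; push_cast; ring

/-- points with the same code have close orbits -/
lemma code_close {m n : ℕ} (hm : 1 ≤ m) {x y : ℝ} (hx : x ∈ Icc (0:ℝ) 1)
    (hy : y ∈ Icc (0:ℝ) 1) (hxy : x ≤ y) (hw : wrd n x = wrd n y)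
    (hs : scode m n x = scode m n y) :
    ∀ k < n, |gtilde^[k] x - gtilde^[k] y| < 1/m := by
  have hwk : ∀ k, k ≤ n → wrd k x = wrd k y := by
    intro k hk
    rw [← wrd_take n k x hk, ← wrd_take n k y hk, hw]
  have hnn : ∀ k ∈ Finset.range n,
      0 ≤ (-1:ℤ)^((wrd k x).count false) * (grd m k y - grd m k x) := by
    intro k hk
    rw [Finset.mem_range] at hk
    have hmono := wrd_mono k hx hy hxy (hwk k hk.le)
    have hm0 : (0:ℝ) < m := by exact_mod_cast hm
    rcases Nat.even_or_odd ((wrd k x).count false) with he | ho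
    · have hsgn : sgn (wrd k x) = 1 := by rw [sgn, he.neg_one_pow]
      rw [hsgn] at hmono
      have hle : gtilde^[k] x ≤ gtilde^[k] y := by nlinarith [hmono]
      have hfl : grd m k x ≤ grd m k y := by
        simp only [grd]
        exact Int.floor_le_floor (by nlinarith [hle])
      rw [he.neg_one_pow]
      linarith
    · have hsgn : sgn (wrd k x) = -1 := by rw [sgn, ho.neg_one_pow]
      rw [hsgn] at hmono
      have hle : gtilde^[k] y ≤ gtilde^[k] x := by nlinarith [hmono]
      have hfl : grd m k y ≤ grd m k x := by
        simp only [grd]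
        exact Int.floor_le_floor (by nlinarith [hle])
      rw [ho.neg_one_pow]
      linarith
  have hsum : ∑ k ∈ Finset.range n, (-1:ℤ)^((wrd k x).count false)
      * (grd m k y - grd m k x) = 0 := by
    have : ∀ k ∈ Finset.range n, (-1:ℤ)^((wrd k y).count false) * grd m k y
        = (-1:ℤ)^((wrd k x).count false) * grd m k y := by
      intro k hk
      rw [Finset.mem_range] at hk
      rw [hwk k hk.le]
    calc ∑ k ∈ Finset.range n, (-1:ℤ)^((wrd k x).count false) * (grd m k y - grd m k x)
        = (∑ k ∈ Finset.range n, (-1:ℤ)^((wrd k x).count false) * grd m k y)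
          - ∑ k ∈ Finset.range n, (-1:ℤ)^((wrd k x).count false) * grd m k x := by
          rw [← Finset.sum_sub_distrib]; congr 1; ext k; ring
      _ = scode m n y - scode m n x := by
          rw [scode, scode]
          congr 1
          exact (Finset.sum_congr rfl this).symm
      _ = 0 := by rw [hs, sub_self]
  have hzero := (Finset.sum_eq_zero_iff_of_nonneg hnn).1 hsum
  intro k hk
  have h0 := hzero k (Finset.mem_range.2 hk)
  have hgrd : grd m k x = grd m k y := by
    rcases mul_eq_zero.1 h0 with h | h
    · exact absurd h (by positivity)
    · linarith [sub_eq_zero.1 h]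
  -- same floor of m * iterate implies distance < 1/m
  have hm0 : (0:ℝ) < m := by exact_mod_cast hm
  have h1 := Int.floor_le ((m:ℝ) * gtilde^[k] x)
  have h2 := Int.lt_floor_add_one ((m:ℝ) * gtilde^[k] x)
  have h3 := Int.floor_le ((m:ℝ) * gtilde^[k] y)
  have h4 := Int.lt_floor_add_one ((m:ℝ) * gtilde^[k] y)
  simp only [grd] at hgrd
  rw [hgrd] at h1 h2
  rw [abs_sub_lt_iff]
  constructor
  · rw [lt_div_iff₀ hm0]
    nlinarith [h1, h2, h3, h4]
  · rw [lt_div_iff₀ hm0]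
    nlinarith [h1, h2, h3, h4]

lemma scode_mem {m n : ℕ} {x : ℝ} (hx : x ∈ Icc (0:ℝ) 1) :
    scode m n x ∈ Finset.Icc (-(n*m : ℤ)) (n*m) := by
  have habs : |scode m n x| ≤ (n*m : ℤ) := by
    calc |scode m n x| ≤ ∑ k ∈ Finset.range n,
        |(-1:ℤ)^((wrd k x).count false) * grd m k x| := Finset.abs_sum_le_sum_abs _ _
      _ ≤ ∑ _k ∈ Finset.range n, (m:ℤ) := by
          apply Finset.sum_le_sum
          intro k _
          rw [abs_mul, abs_pow, abs_neg, abs_one, one_pow, one_mul]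
          have h := grd_mem (m := m) (k := k) hx
          rw [Finset.mem_Icc] at h
          rw [abs_le]
          exact ⟨by linarith [h.1], h.2⟩
      _ = (n*m : ℤ) := by rw [Finset.sum_const, Finset.card_range]; push_cast; ring
  rw [Finset.mem_Icc]
  exact abs_le.1 habs

lemma coverMincard_bound (m n : ℕ) (hm : 1 ≤ m) {ε : ℝ} (hε : 1/(m:ℝ) ≤ ε) :
    coverMincard gtilde (Icc (0:ℝ) 1) {p : ℝ × ℝ | dist p.1 p.2 < ε} n
      ≤ ((Nat.fib (n+2) * (2*n*m+1) : ℕ) : ℕ∞) := by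
  classical
  set c : ℝ → List Bool × ℤ := fun x => (wrd n x, scode m n x) with hc
  set rep : List Bool × ℤ → ℝ := fun κ =>
    if h : ∃ z ∈ Icc (0:ℝ) 1, c z = κ then h.choose else 0 with hrep
  set K : Finset (List Bool × ℤ) :=
    (W n) ×ˢ (Finset.Icc (-(n*m : ℤ)) (n*m)) with hK
  have hcover : IsDynCoverOf gtilde (Icc (0:ℝ) 1)
      {p : ℝ × ℝ | dist p.1 p.2 < ε} n (↑(K.image rep) : Set ℝ) := by
    intro x hx
    have hcx : c x ∈ K := by
      rw [hK, Finset.mem_product]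
      exact ⟨mem_W.2 ⟨wrd_length n x, wrd_adm n hx⟩, scode_mem hx⟩
    have hex : ∃ z ∈ Icc (0:ℝ) 1, c z = c x := ⟨x, hx, rfl⟩
    have hyspec : rep (c x) ∈ Icc (0:ℝ) 1 ∧ c (rep (c x)) = c x := by
      rw [hrep]
      simp only [dif_pos hex]
      exact ⟨hex.choose_spec.1, hex.choose_spec.2⟩
    set y := rep (c x) with hy
    have hclose : ∀ k < n, |gtilde^[k] y - gtilde^[k] x| < 1/m := by
      have hcc : wrd n y = wrd n x ∧ scode m n y = scode m n x := by
        have := hyspec.2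
        rw [hc] at this
        exact ⟨congrArg Prod.fst this, congrArg Prod.snd this⟩
      rcases le_total y x with hle | hle
      · exact code_close hm hyspec.1 hx hle hcc.1 hcc.2
      · intro k hk
        rw [abs_sub_comm]
        exact code_close hm hx hyspec.1 hle hcc.1.symm hcc.2.symm k hk
    refine ⟨y, ?_, ?_⟩
    · simp only [Finset.coe_image, Set.mem_image, Finset.mem_coe]
      exact ⟨c x, hcx, rfl⟩
    · rw [mem_dynEntourage]
      intro k hk
      simp only [Set.mem_setOf_eq]
      rw [Real.dist_eq, abs_sub_comm]
      exact lt_of_lt_of_le (hclose k hk) hε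
  have h1 := hcover.coverMincard_le_card
  have h2 : (K.image rep).card ≤ Nat.fib (n+2) * (2*n*m+1) := by
    calc (K.image rep).card ≤ K.card := Finset.card_image_le
      _ = (W n).card * (Finset.Icc (-(n*m : ℤ)) (n*m)).card := Finset.card_product _ _
      _ = Nat.fib (n+2) * (2*n*m+1) := by
          rw [(W_card n).1, Int.card_Icc]
          have h : ((n*m : ℤ) + 1 - -(n*m : ℤ)) = ((2*n*m+1 : ℕ) : ℤ) := by push_cast; ring
          rw [h, Int.toNat_natCast]
  exact le_trans h1 (by exact_mod_cast h2)

lemma fib_le_gold_pow : ∀ n : ℕ, (Nat.fib (n+2) : ℝ) ≤ goldenRatio^(n+1)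
  | 0 => by
      have hf : Nat.fib 2 = 1 := by decide
      rw [hf, pow_one]
      exact_mod_cast one_lt_goldenRatio.le
  | 1 => by
      have hf : Nat.fib 3 = 2 := by decide
      rw [hf, goldenRatio_sq]
      have := one_lt_goldenRatio
      push_cast
      linarith
  | (n+2) => by
      have h1 := fib_le_gold_pow n
      have h2 := fib_le_gold_pow (n+1)
      rw [Nat.fib_add_two]
      have : goldenRatio ^ (n+2+1) = goldenRatio ^ (n+1+1) + goldenRatio ^ (n+1) := by
        calc goldenRatio ^ (n+3) = goldenRatio ^ (n+1) * goldenRatio ^ 2 := by ring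
          _ = goldenRatio ^ (n+1) * (goldenRatio + 1) := by rw [goldenRatio_sq]
          _ = goldenRatio ^ (n+2) + goldenRatio ^ (n+1) := by ring
      rw [this]
      push_cast
      linarith

lemma upper_per_eps {ε : ℝ} (hε : 0 < ε) :
    coverEntropyEntourage gtilde (Icc (0:ℝ) 1) {p : ℝ × ℝ | dist p.1 p.2 < ε}
      ≤ (Real.log goldenRatio : EReal) := by
  obtain ⟨m, hm⟩ := exists_nat_gt (2/ε)
  have hm1 : 1 ≤ m := by
    have h0 : (0:ℝ) < 2/ε := by positivity
    have hR : (0:ℝ) < m := lt_trans h0 hm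
    have : 0 < m := by exact_mod_cast hR
    omega
  have hmε : 1/(m:ℝ) ≤ ε/2 := by
    have hm0 : (0:ℝ) < m := by exact_mod_cast hm1
    rw [div_le_div_iff₀ hm0 (by norm_num)]
    rw [div_lt_iff₀ hε] at hm
    linarith
  set U : Set (ℝ × ℝ) := {p | dist p.1 p.2 < ε/2} with hU
  have hUsymm : SetRel.IsSymm U := by
    constructor
    intro a b h
    simp only [hU, Set.mem_setOf_eq] at h ⊢
    rwa [dist_comm]
  have hUU : U ○ U ⊆ {p : ℝ × ℝ | dist p.1 p.2 < ε} := by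
    rintro ⟨a, b⟩ ⟨z, hz1, hz2⟩
    simp only [hU, Set.mem_setOf_eq] at hz1 hz2 ⊢
    calc dist a b ≤ dist a z + dist z b := dist_triangle _ _ _
      _ < ε/2 + ε/2 := add_lt_add hz1 hz2
      _ = ε := by ring
  have hmain : ∀ n : ℕ, 1 ≤ n → coverEntropyEntourage gtilde (Icc (0:ℝ) 1)
      {p : ℝ × ℝ | dist p.1 p.2 < ε}
      ≤ ((((n:ℝ)+1) * Real.log goldenRatio + Real.log (2*n*m+1)) / n : ℝ) := by
    intro n hn
    have step1 : coverEntropyEntourage gtilde (Icc (0:ℝ) 1)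
        {p : ℝ × ℝ | dist p.1 p.2 < ε} ≤ coverEntropyEntourage gtilde (Icc (0:ℝ) 1) (U ○ U) :=
      coverEntropyEntourage_antitone gtilde (Icc (0:ℝ) 1) hUU
    have step2 := coverEntropyEntourage_le_log_coverMincard_div gtilde_maps
      (by omega) (F := Icc (0:ℝ) 1) (U := U) (n := n)
    have step3 : ENNReal.log (coverMincard gtilde (Icc (0:ℝ) 1) U n)
        ≤ ((((n:ℝ)+1) * Real.log goldenRatio + Real.log (2*n*m+1) : ℝ) : EReal) := by
      have hc := coverMincard_bound m n hm1 hmε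
      have hlogc := ENNReal.log_monotone (ENat.toENNReal_mono hc)
      refine le_trans hlogc ?_
      have hcast : ((((Nat.fib (n+2) * (2*n*m+1) : ℕ)) : ℕ∞) : ENNReal)
          = ENNReal.ofReal ((Nat.fib (n+2) * (2*n*m+1) : ℕ) : ℝ) := by
        rw [ENNReal.ofReal_natCast]; simp
      rw [hcast]
      have hle : ((Nat.fib (n+2) * (2*n*m+1) : ℕ) : ℝ)
          ≤ goldenRatio^(n+1) * (2*n*m+1) := by
        push_cast
        have h1 := fib_le_gold_pow n
        have h0 : (0:ℝ) ≤ 2*n*m+1 := by positivity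
        nlinarith [h1, h0]
      refine le_trans (ENNReal.log_monotone (ENNReal.ofReal_le_ofReal hle)) ?_
      rw [ENNReal.log_ofReal_of_pos (by positivity)]
      rw [Real.log_mul (by positivity) (by positivity), Real.log_pow]
      push_cast
      norm_num
    calc coverEntropyEntourage gtilde (Icc (0:ℝ) 1) {p : ℝ × ℝ | dist p.1 p.2 < ε}
        ≤ coverEntropyEntourage gtilde (Icc (0:ℝ) 1) (U ○ U) := step1
      _ ≤ ENNReal.log (coverMincard gtilde (Icc (0:ℝ) 1) U n) / n := step2
      _ ≤ ((((n:ℝ)+1) * Real.log goldenRatio + Real.log (2*n*m+1) : ℝ) : EReal) / (n : EReal) :=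
          EReal.div_le_div_right_of_nonneg (Nat.cast_nonneg' n) step3
      _ = ((((n:ℝ)+1) * Real.log goldenRatio + Real.log (2*n*m+1)) / n : ℝ) := by
          rw [EReal.coe_div]; norm_cast
  -- take the limit
  have hlim : Filter.Tendsto (fun n : ℕ =>
      (((((n:ℝ)+1) * Real.log goldenRatio + Real.log (2*n*m+1)) / n : ℝ) : EReal))
      Filter.atTop (𝓝 ((Real.log goldenRatio : ℝ) : EReal)) := by
    rw [EReal.tendsto_coe]
    have hsplit : ∀ n : ℕ, ((((n:ℝ)+1) * Real.log goldenRatio + Real.log (2*n*m+1)) / n : ℝ)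
        = ((n:ℝ)+1)/n * Real.log goldenRatio + Real.log (2*n*m+1)/n := by
      intro n; ring
    simp only [hsplit]
    have h1 : Filter.Tendsto (fun n : ℕ => ((n:ℝ)+1)/n * Real.log goldenRatio)
        Filter.atTop (𝓝 (Real.log goldenRatio)) := by
      have ha : Filter.Tendsto (fun n : ℕ => ((n:ℝ)+1)/n) Filter.atTop (𝓝 1) := by
        have heq : ∀ᶠ n : ℕ in Filter.atTop, 1 + 1/(n:ℝ) = ((n:ℝ)+1)/n := by
          filter_upwards [Filter.eventually_ge_atTop 1] with n hn
          have : (n:ℝ) ≠ 0 := by positivity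
          field_simp
        refine Filter.Tendsto.congr' heq ?_
        have := Filter.Tendsto.add (tendsto_const_nhds (x := (1:ℝ)))
          tendsto_one_div_atTop_nhds_zero_nat
        simpa using this
      have := ha.mul_const (Real.log goldenRatio)
      simpa using this
    have h2 : Filter.Tendsto (fun n : ℕ => Real.log (2*(n:ℝ)*m+1)/n)
        Filter.atTop (𝓝 0) := by
      have hlogn : Filter.Tendsto (fun n : ℕ => Real.log n / n) Filter.atTop (𝓝 0) :=
        (Real.isLittleO_log_id_atTop.tendsto_div_nhds_zero).comp
          tendsto_natCast_atTop_atTop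
      have hconst : Filter.Tendsto (fun n : ℕ => Real.log (2*(m:ℝ)+1) / n)
          Filter.atTop (𝓝 0) := by
        have := tendsto_one_div_atTop_nhds_zero_nat.const_mul (Real.log (2*(m:ℝ)+1))
        simpa [div_eq_mul_inv, mul_comm] using this
      have hg : Filter.Tendsto (fun n : ℕ => Real.log (2*(m:ℝ)+1) / n + Real.log n / n)
          Filter.atTop (𝓝 0) := by
        have := hconst.add hlogn
        simpa using this
      apply squeeze_zero (g := fun n : ℕ => Real.log (2*(m:ℝ)+1) / n + Real.log n / n)
      · intro n
        apply div_nonneg _ (Nat.cast_nonneg n)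
        apply Real.log_nonneg
        have : (0:ℝ) ≤ 2*(n:ℝ)*m := by positivity
        linarith
      · intro n
        cases Nat.eq_zero_or_pos n with
        | inl h => subst h; simp
        | inr hn =>
          have hn1 : (1:ℝ) ≤ (n:ℝ) := by exact_mod_cast hn
          rw [← add_div, div_le_div_iff₀ (by linarith) (by linarith)]
          have hlog : Real.log (2*(n:ℝ)*m+1) ≤ Real.log (2*(m:ℝ)+1) + Real.log n := by
            rw [← Real.log_mul (by positivity) (by linarith)]
            apply Real.log_le_log (by positivity)
            nlinarith [hn1]
          nlinarith [hlog, hn1]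
      · exact hg
    have := h1.add h2
    simpa using this
  exact ge_of_tendsto hlim (by
    filter_upwards [Filter.eventually_ge_atTop 1] with n hn
    exact hmain n hn)

/-- The topological entropy (Bowen–Dinaburg cover entropy) of the compactified slow Gauss
map `g̃ : [0,1] → [0,1]` equals `log((1+√5)/2)`. -/
theorem entropy_slow_gauss :
    Dynamics.coverEntropy gtilde (Set.Icc (0 : ℝ) 1) =
      (Real.log ((1 + Real.sqrt 5) / 2) : EReal) := by
  have hgold : ((1 + Real.sqrt 5) / 2 : ℝ) = goldenRatio := rfl
  rw [hgold]
  apply le_antisymm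
  · rw [coverEntropy_eq_iSup_basis Metric.uniformity_basis_dist gtilde (Icc (0:ℝ) 1)]
    exact iSup₂_le fun ε hε => upper_per_eps hε
  · exact le_trans lower_bound
      (netEntropyEntourage_le_coverEntropy gtilde (Icc (0:ℝ) 1) U0_uni)
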